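/- Suppose √d has continued fraction expansion [a₀; overline(a₁, …, a_{l−1}, a_l, a_{l−1}, …, a₁, 2a₀)] with even period length k = 2l. Then p_{k−1} = a₀·q_{k−1} + q_{k−2}. -/
import Mathlib


/-- Iteration of the Gauss-type map producing the complete quotients of the
continued fraction expansion of `α`. -/
noncomputable def cfIter (α : ℝ) : ℕ → ℝ
  | 0 => α
  | n + 1 => (Int.fract (cfIter α n))⁻¹

/-- The `n`-th partial quotient of the continued fraction of `α`. -/
noncomputable def cfTerm (α : ℝ) (n : ℕ) : ℤ := ⌊cfIter α n⌋

/-- `t` is an eventual period of the sequence `f`. -/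
def EvPeriod (t : ℕ) (f : ℕ → ℤ) : Prop := ∃ N, ∀ n, N ≤ n → f (n + t) = f n

/-- `periodLen α` is the length of the periodic part of the continued fraction
expansion of `α`: the least positive eventual period of its partial quotients. -/
noncomputable def periodLen (α : ℝ) : ℕ := sInf {t | 0 < t ∧ EvPeriod t (cfTerm α)}

/-- Numerators `p_k` of the convergents of the continued fraction `[a 0; a 1, a 2, …]`. -/
def convP (a : ℕ → ℤ) : ℕ → ℤ
  | 0 => a 0
  | 1 => a 0 * a 1 + 1
  | n + 2 => a (n + 2) * convP a (n + 1) + convP a n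

/-- Denominators `q_k` of the convergents of the continued fraction `[a 0; a 1, a 2, …]`. -/
def convQ (a : ℕ → ℤ) : ℕ → ℤ
  | 0 => 1
  | 1 => a 1
  | n + 2 => a (n + 2) * convQ a (n + 1) + convQ a n

open Matrix in
/-- auxiliary matrix -/
def cfM (x : ℤ) : Matrix (Fin 2) (Fin 2) ℤ := !![x, 1; 1, 0]

def prodA (a : ℕ → ℤ) (n : ℕ) : Matrix (Fin 2) (Fin 2) ℤ :=
  ((List.range n).map (fun i => cfM (a i))).prod

lemma cfM_symm (x : ℤ) : (cfM x).transpose = cfM x := by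
  ext i j; fin_cases i <;> fin_cases j <;> simp [cfM]

lemma prodA_eq (a : ℕ → ℤ) : ∀ n, prodA a (n + 2) =
    !![convP a (n + 1), convP a n; convQ a (n + 1), convQ a n] := by
  intro n
  induction n with
  | zero =>
      show prodA a 2 = _
      rw [prodA, List.range_succ, List.range_succ]
      simp only [List.range_zero, List.map_nil, List.map_append, List.map_cons,
        List.nil_append, List.prod_cons, List.prod_nil, mul_one]
      ext i j; fin_cases i <;> fin_cases j <;>
        simp [cfM, convP, convQ, Matrix.mul_apply, Fin.sum_univ_succ] <;> ring
  | succ n ih =>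
      have h : prodA a (n + 3) = prodA a (n + 2) * cfM (a (n + 2)) := by
        rw [prodA, List.range_succ, List.map_append, List.prod_append]
        simp [prodA]
      rw [h, ih]
      ext i j; fin_cases i <;> fin_cases j <;>
        simp [cfM, Matrix.mul_apply, Fin.sum_univ_succ, convP, convQ] <;> ring

lemma prodA_shift (a : ℕ → ℤ) (n : ℕ) :
    prodA a (n + 1) = cfM (a 0) * prodA (fun i => a (i + 1)) n := by
  rw [prodA, List.range_succ_eq_map, List.map_cons, List.map_map, List.prod_cons, prodA]
  rfl

lemma rev_map_range {M : Type*} :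
    ∀ (m : ℕ) (f : ℕ → M),
      ((List.range m).map f).reverse = (List.range m).map (fun i => f (m - 1 - i)) := by
  intro m
  induction m with
  | zero => intro f; simp
  | succ m ih =>
      intro f
      conv_rhs => rw [List.range_succ, List.map_append]
      rw [List.range_succ_eq_map, List.map_cons, List.reverse_cons, List.map_map,
        ih (f ∘ Nat.succ)]
      simp only [List.map_cons, List.map_nil, Function.comp]
      congr 1
      · apply List.map_congr_left
        intro i hi
        rw [List.mem_range] at hi
        congr 1
        omega
      · have : m + 1 - 1 - m = 0 := by omega
        rw [this]

lemma prodA_symm (b : ℕ → ℤ) (m : ℕ) (hpal : ∀ j, j < m → b j = b (m - 1 - j)) :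
    (prodA b m).transpose = prodA b m := by
  rw [prodA, Matrix.transpose_list_prod, List.map_map]
  have h1 : (Matrix.transpose ∘ fun i => cfM (b i)) = fun i => cfM (b i) := by
    funext i; exact cfM_symm (b i)
  rw [h1, rev_map_range]
  congr 1
  apply List.map_congr_left
  intro i hi
  rw [List.mem_range] at hi
  rw [← hpal i hi]

/-- If `√d` has even period `k = 2l` with palindromic period, then
`p (k-1) = a 0 * q (k-1) + q (k-2)`. -/
theorem stmt10 (d : ℕ) (hd : 0 < d) (hsq : ¬ IsSquare d) (l : ℕ) (hl : 1 ≤ l)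
    (a : ℕ → ℤ) (ha : a = cfTerm (Real.sqrt d))
    (hper : periodLen (Real.sqrt d) = 2 * l)
    (hperiodic : ∀ n, 1 ≤ n → a (n + 2 * l) = a n)
    (hpal : ∀ i, 1 ≤ i → i ≤ 2 * l - 1 → a i = a (2 * l - i))
    (hlast : a (2 * l) = 2 * a 0) :
    convP a (2 * l - 1) = a 0 * convQ a (2 * l - 1) + convQ a (2 * l - 2) := by
  rcases Nat.lt_or_ge l 2 with h2 | h2
  · -- l = 1
    have hl1 : l = 1 := by omega
    subst hl1
    show convP a 1 = a 0 * convQ a 1 + convQ a 0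
    simp [convP, convQ]
  · obtain ⟨m, rfl⟩ : ∃ m, l = m + 2 := ⟨l - 2, by omega⟩
    set b : ℕ → ℤ := fun i => a (i + 1) with hbdef
    have hb : ∀ j, j < 2 * m + 3 → b j = b (2 * m + 3 - 1 - j) := by
      intro j hj
      have h1 : a (j + 1) = a (2 * (m + 2) - (j + 1)) := hpal (j + 1) (by omega) (by omega)
      have h2 : 2 * (m + 2) - (j + 1) = (2 * m + 3 - 1 - j) + 1 := by omega
      simpa [hbdef, h2] using h1
    have hsymm := prodA_symm b (2 * m + 3) hb
    have hP := prodA_eq b (2 * m + 1)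
    have h10 : convP b (2 * m + 1) = convQ b (2 * m + 2) := by
      have h := congrFun (congrFun hsymm 0) 1
      rw [hP] at h
      simpa [Matrix.transpose_apply] using h.symm
    have hfull : prodA a (2 * m + 4) = cfM (a 0) * prodA b (2 * m + 3) :=
      prodA_shift a (2 * m + 3)
    have hA := prodA_eq a (2 * m + 2)
    have hkey : (!![convP a (2 * m + 3), convP a (2 * m + 2);
        convQ a (2 * m + 3), convQ a (2 * m + 2)] : Matrix (Fin 2) (Fin 2) ℤ)
        = cfM (a 0) * !![convP b (2 * m + 2), convP b (2 * m + 1);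
            convQ b (2 * m + 2), convQ b (2 * m + 1)] := by
      rw [← hA, ← hP, hfull]
    have e00 : convP a (2 * m + 3) = a 0 * convP b (2 * m + 2) + convQ b (2 * m + 2) := by
      have h := congrFun (congrFun hkey 0) 0
      simpa [cfM, Matrix.mul_apply, Fin.sum_univ_succ] using h
    have e10 : convQ a (2 * m + 3) = convP b (2 * m + 2) := by
      have h := congrFun (congrFun hkey 1) 0
      simpa [cfM, Matrix.mul_apply, Fin.sum_univ_succ] using h
    have e11 : convQ a (2 * m + 2) = convP b (2 * m + 1) := by
      have h := congrFun (congrFun hkey 1) 1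
      simpa [cfM, Matrix.mul_apply, Fin.sum_univ_succ] using h
    have g1 : 2 * (m + 2) - 1 = 2 * m + 3 := by omega
    have g2 : 2 * (m + 2) - 2 = 2 * m + 2 := by omega
    rw [g1, g2, e00, e10, e11, h10]
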